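/- Quantum Neyman–Pearson: let σ, ρ be density operators, t ≥ 0, let P_+ = supp (σ − tρ)_+ (the projection onto the span of eigenvectors of σ − tρ with positive eigenvalue) and P₀ the projection onto the kernel of σ − tρ. Then an operator M with 0 ≤ M ≤ I maximizes Tr((σ − tρ)M) over all 0 ≤ M ≤ I if and only if M = P_+ + X with 0 ≤ X ≤ P₀. Moreover, max_{0 ≤ M ≤ I} Tr((σ − tρ)M) = Tr((σ − tρ)_+) = ½(Tr(σ − tρ) + ‖σ − tρ‖₁). -/

import Mathlib

open Matrix ComplexOrder

section Helpers
variable {N : Type*} [Fintype N] [DecidableEq N]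

open scoped MatrixOrder Matrix.Norms.L2Operator in
noncomputable def Matrix.PosSemidef.sqrt {M : Matrix N N ℂ} (_hM : M.PosSemidef) :
    Matrix N N ℂ := CFC.sqrt M

open scoped MatrixOrder Matrix.Norms.L2Operator in
lemma Matrix.PosSemidef.posSemidef_sqrt {M : Matrix N N ℂ} (hM : M.PosSemidef) :
    hM.sqrt.PosSemidef := (CFC.sqrt_nonneg M).posSemidef

open scoped MatrixOrder Matrix.Norms.L2Operator in
lemma Matrix.PosSemidef.sqrt_mul_self {M : Matrix N N ℂ} (hM : M.PosSemidef) :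
    hM.sqrt * hM.sqrt = M := CFC.sqrt_mul_sqrt_self M hM.nonneg

private lemma np_diag_nonneg {M : Matrix N N ℂ} (hM : M.PosSemidef) (i : N) : 0 ≤ M i i := by
  have := hM.dotProduct_mulVec_nonneg (Pi.single i 1)
  simpa [dotProduct, mulVec, Pi.single_apply, Finset.mul_sum] using this

private lemma np_trace_nonneg {M : Matrix N N ℂ} (hM : M.PosSemidef) : 0 ≤ M.trace :=
  Finset.sum_nonneg fun i _ => np_diag_nonneg hM i

private lemma np_psd_trace_zero {M : Matrix N N ℂ} (hM : M.PosSemidef) (h : M.trace = 0) :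
    M = 0 := by
  have hdiag : ∀ i, M i i = 0 := by
    intro i
    exact (Finset.sum_eq_zero_iff_of_nonneg (fun i _ => np_diag_nonneg hM i)).mp h i
      (Finset.mem_univ i)
  set S := hM.sqrt with hSdef
  have hSH : Sᴴ = S := hM.posSemidef_sqrt.isHermitian
  have hSS : S * S = M := hM.sqrt_mul_self
  have hS0 : S = 0 := by
    ext i j
    have h1 : (Sᴴ * S) j j = 0 := by rw [hSH, hSS]; exact hdiag j
    have h2 : ∀ k, (Complex.normSq (S k j) : ℂ) = star (S k j) * S k j := by
      intro k; rw [Complex.normSq_eq_conj_mul_self]; rfl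
    have h3 : (∑ k, (Complex.normSq (S k j) : ℂ)) = 0 := by
      rw [← h1, Matrix.mul_apply]
      exact Finset.sum_congr rfl fun k _ => by rw [h2 k, conjTranspose_apply]
    have h4 : (∑ k, Complex.normSq (S k j)) = 0 := by exact_mod_cast h3
    have h5 := (Finset.sum_eq_zero_iff_of_nonneg
      (fun k _ => Complex.normSq_nonneg (S k j))).mp h4 i (Finset.mem_univ i)
    simpa using Complex.normSq_eq_zero.mp h5
  rw [← hSS, hS0, Matrix.zero_mul]

private lemma np_trace_mul_nonneg {A B : Matrix N N ℂ} (hA : A.PosSemidef) (hB : B.PosSemidef) :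
    0 ≤ (A * B).trace := by
  have h1 : (A * B).trace = (hA.sqrt * B * hA.sqrt).trace := by
    conv_lhs => rw [← hA.sqrt_mul_self]
    exact (Matrix.trace_mul_cycle hA.sqrt B hA.sqrt).symm
  rw [h1]
  have := hB.conjTranspose_mul_mul_same hA.sqrt
  rw [hA.posSemidef_sqrt.isHermitian] at this
  exact np_trace_nonneg this

private lemma np_mul_eq_zero {A B : Matrix N N ℂ} (hA : A.PosSemidef) (hB : B.PosSemidef)
    (h : (A * B).trace = 0) : A * B = 0 := by
  have h1 : (A * B).trace = (hA.sqrt * B * hA.sqrt).trace := by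
    conv_lhs => rw [← hA.sqrt_mul_self]
    exact (Matrix.trace_mul_cycle hA.sqrt B hA.sqrt).symm
  have hpsd : (hA.sqrt * B * hA.sqrt).PosSemidef := by
    have := hB.conjTranspose_mul_mul_same hA.sqrt
    rwa [hA.posSemidef_sqrt.isHermitian] at this
  have h2 : hA.sqrt * B * hA.sqrt = 0 := np_psd_trace_zero hpsd (h1 ▸ h)
  have h3 : (hB.sqrt * hA.sqrt)ᴴ * (hB.sqrt * hA.sqrt) = 0 := by
    rw [conjTranspose_mul, hA.posSemidef_sqrt.isHermitian, hB.posSemidef_sqrt.isHermitian]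
    calc hA.sqrt * hB.sqrt * (hB.sqrt * hA.sqrt)
        = hA.sqrt * (hB.sqrt * hB.sqrt) * hA.sqrt := by
          simp only [Matrix.mul_assoc]
      _ = 0 := by rw [hB.sqrt_mul_self]; exact h2
  have h4 : hB.sqrt * hA.sqrt = 0 := conjTranspose_mul_self_eq_zero.mp h3
  have h5 : B * A = 0 := by
    calc B * A = hB.sqrt * (hB.sqrt * hA.sqrt) * hA.sqrt := by
          conv_lhs => rw [← hB.sqrt_mul_self, ← hA.sqrt_mul_self]
          simp only [Matrix.mul_assoc]
      _ = 0 := by rw [h4, Matrix.mul_zero, Matrix.zero_mul]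
  calc A * B = (B * A)ᴴ := by rw [conjTranspose_mul, hA.isHermitian, hB.isHermitian]
    _ = 0 := by rw [h5, conjTranspose_zero]

private lemma np_mulvec_zero {A : Matrix N N ℂ} (h : ∀ x : N → ℂ, A *ᵥ x = 0) : A = 0 := by
  ext i j
  have := congrFun (h (Pi.single j 1)) i
  simpa [mulVec_single] using this

end Helpers

/-- quantum Neyman–Pearson lemma: Let `σ, ρ` be density matrices,
`t ≥ 0`, `a = σ - tρ`, `Pplus = supp a₊` (projection onto the positive spectral
part of `a`) and `P₀` the projection onto the kernel of `a`. Then `0 ≤ M ≤ 1`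
maximizes `Tr(aM)` iff `M = Pplus + X` with `0 ≤ X ≤ P₀`, and the maximum is
`Tr(a₊) = ½(Tr a + ‖a‖₁)`, where `‖a‖₁` is the sum of the absolute values of
the eigenvalues of `a`. -/
theorem stmt17 {N : Type*} [Fintype N] [DecidableEq N]
    (σ ρ : Matrix N N ℂ) (hσ : σ.PosSemidef) (hσ1 : σ.trace = 1)
    (hρ : ρ.PosSemidef) (hρ1 : ρ.trace = 1)
    (t : ℝ) (ht : 0 ≤ t)
    (a : Matrix N N ℂ) (hadef : a = σ - (t : ℂ) • ρ) (ha : a.IsHermitian)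
    (Pplus P₀ : Matrix N N ℂ)
    (hP1 : Pplus.IsHermitian) (hP2 : Pplus * Pplus = Pplus)
    (h01 : P₀.IsHermitian) (h02 : P₀ * P₀ = P₀)
    (horth : Pplus * P₀ = 0)
    (hker : ∀ x : N → ℂ, a.mulVec x = 0 ↔ P₀.mulVec x = x)
    (hcomm : a * Pplus = Pplus * a)
    (hposP : (a * Pplus).PosSemidef)
    (haP0 : a * P₀ = 0)
    (hneg : (-(a * (1 - Pplus - P₀))).PosSemidef) :
    (∀ M : Matrix N N ℂ, M.PosSemidef → ((1 : Matrix N N ℂ) - M).PosSemidef →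
      ((a * M).trace).re ≤ ((a * Pplus).trace).re) ∧
    (∀ M : Matrix N N ℂ, M.PosSemidef → ((1 : Matrix N N ℂ) - M).PosSemidef →
      ((a * M).trace = (a * Pplus).trace ↔
        ∃ X : Matrix N N ℂ, X.PosSemidef ∧ (P₀ - X).PosSemidef ∧ M = Pplus + X)) ∧
    ((a * Pplus).trace).re = (a.trace.re + ∑ i, |ha.eigenvalues i|) / 2 := by
  -- notation
  set Q : Matrix N N ℂ := 1 - Pplus - P₀ with hQdef
  -- basic consequences
  have hP0a : P₀ * a = 0 := by
    have := congrArg conjTranspose haP0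
    rwa [conjTranspose_mul, h01.eq, ha.eq, conjTranspose_zero] at this
  have hP0P : P₀ * Pplus = 0 := by
    have := congrArg conjTranspose horth
    rwa [conjTranspose_mul, h01.eq, hP1.eq, conjTranspose_zero] at this
  have hQH : Qᴴ = Q := by
    rw [hQdef, conjTranspose_sub, conjTranspose_sub, conjTranspose_one, hP1.eq, h01.eq]
  have hQP0 : Q * P₀ = 0 := by
    rw [hQdef, sub_mul, sub_mul, one_mul, horth, h02, sub_zero, sub_self]
  have hQP : Q * Pplus = 0 := by
    rw [hQdef, sub_mul, sub_mul, one_mul, hP2, hP0P, sub_zero, sub_self]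
  have hPQ : Pplus * Q = 0 := by
    rw [hQdef, mul_sub, mul_sub, mul_one, hP2, horth, sub_zero, sub_self]
  have hQQ : Q * Q = Q := by
    rw [hQdef]
    simp only [sub_mul, mul_sub, one_mul, mul_one, hP2, h02, horth, hP0P]
    abel
  have hQpsd : Q.PosSemidef := by
    have := posSemidef_conjTranspose_mul_self Q
    rwa [hQH, hQQ] at this
  have hPpsd : Pplus.PosSemidef := by
    have := posSemidef_conjTranspose_mul_self Pplus
    rwa [hP1.eq, hP2] at this
  have hP0psd : P₀.PosSemidef := by
    have := posSemidef_conjTranspose_mul_self P₀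
    rwa [h01.eq, h02] at this
  have haQ : a * Q = Q * a := by
    rw [hQdef, mul_sub, mul_sub, sub_mul, sub_mul, mul_one, one_mul, hcomm, haP0, hP0a]
  have hsplit : a = a * Pplus + a * Q := by
    rw [hQdef, mul_sub, mul_sub, mul_one, haP0, sub_zero]
    abel
  -- key trace identity and inequality
  have key : ∀ M : Matrix N N ℂ, M.PosSemidef → ((1 : Matrix N N ℂ) - M).PosSemidef →
      (a * Pplus).trace - (a * M).trace
        = ((a * Pplus) * (1 - M)).trace + ((-(a * Q)) * M).trace := by
    intro M hM h1M
    have e1 : (a * M).trace = ((a * Pplus) * M).trace + ((a * Q) * M).trace := by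
      conv_lhs => rw [hsplit]
      rw [add_mul, trace_add]
    rw [Matrix.mul_sub, Matrix.mul_one, trace_sub, neg_mul, trace_neg, e1]
    ring
  have keyle : ∀ M : Matrix N N ℂ, M.PosSemidef → ((1 : Matrix N N ℂ) - M).PosSemidef →
      (a * M).trace ≤ (a * Pplus).trace := by
    intro M hM h1M
    have t1 : 0 ≤ ((a * Pplus) * (1 - M)).trace := np_trace_mul_nonneg hposP h1M
    have t2 : 0 ≤ ((-(a * Q)) * M).trace := np_trace_mul_nonneg hneg hM
    have h0 : 0 ≤ (a * Pplus).trace - (a * M).trace := by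
      rw [key M hM h1M]; exact add_nonneg t1 t2
    exact sub_nonneg.mp h0
  refine ⟨fun M hM h1M => ((Complex.le_def).mp (keyle M hM h1M)).1, ?_, ?_⟩
  · -- part 2
    intro M hM h1M
    constructor
    · intro h
      have t1 : 0 ≤ ((a * Pplus) * (1 - M)).trace := np_trace_mul_nonneg hposP h1M
      have t2 : 0 ≤ ((-(a * Q)) * M).trace := np_trace_mul_nonneg hneg hM
      have hsum : ((a * Pplus) * (1 - M)).trace + ((-(a * Q)) * M).trace = 0 := by
        rw [← key M hM h1M, h, sub_self]
      have ht1 : ((a * Pplus) * (1 - M)).trace = 0 := by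
        have h' : ((a * Pplus) * (1 - M)).trace = -(((-(a * Q)) * M).trace) :=
          eq_neg_of_add_eq_zero_left hsum
        exact le_antisymm (h' ▸ neg_nonpos.mpr t2) t1
      have ht2 : ((-(a * Q)) * M).trace = 0 := by rw [ht1, zero_add] at hsum; exact hsum
      have hbz : (a * Pplus) * (1 - M) = 0 := np_mul_eq_zero hposP h1M ht1
      have hcz : (-(a * Q)) * M = 0 := np_mul_eq_zero hneg hM ht2
      have hcz' : (a * Q) * M = 0 := by
        have := congrArg Neg.neg hcz
        simpa [neg_mul] using this
      have hkerM : ∀ B : Matrix N N ℂ, a * B = 0 → P₀ * B = B := by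
        intro B hB
        ext i j
        have h1 : a *ᵥ (B *ᵥ Pi.single j 1) = 0 := by
          rw [mulVec_mulVec, hB, zero_mulVec]
        have h3 := congrFun ((hker _).mp h1) i
        rw [mulVec_mulVec] at h3
        simpa [mulVec_single] using h3
      have hPM : Pplus * (1 - M) = 0 := by
        have e0 : a * (Pplus * (1 - M)) = 0 := by rw [← Matrix.mul_assoc, hbz]
        have e1 := hkerM _ e0
        calc Pplus * (1 - M) = (Pplus * Pplus) * (1 - M) := by rw [hP2]
          _ = Pplus * (Pplus * (1 - M)) := by rw [Matrix.mul_assoc]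
          _ = Pplus * (P₀ * (Pplus * (1 - M))) := by rw [e1]
          _ = (Pplus * P₀) * (Pplus * (1 - M)) := by rw [Matrix.mul_assoc]
          _ = 0 := by rw [horth, Matrix.zero_mul]
      have hQM : Q * M = 0 := by
        have e0 : a * (Q * M) = 0 := by rw [← Matrix.mul_assoc]; exact hcz'
        have e1 := hkerM _ e0
        calc Q * M = (Q * Q) * M := by rw [hQQ]
          _ = Q * (Q * M) := by rw [Matrix.mul_assoc]
          _ = Q * (P₀ * (Q * M)) := by rw [e1]
          _ = (Q * P₀) * (Q * M) := by rw [Matrix.mul_assoc]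
          _ = 0 := by rw [hQP0, Matrix.zero_mul]
      have hPMe : Pplus * M = Pplus := by
        have h' := hPM
        rw [mul_sub, mul_one, sub_eq_zero] at h'
        exact h'.symm
      have hMdecomp : M = Pplus + P₀ * M := by
        have h1 : (1 : Matrix N N ℂ) = Pplus + P₀ + Q := by rw [hQdef]; abel
        calc M = (Pplus + P₀ + Q) * M := by rw [← h1, one_mul]
          _ = Pplus * M + P₀ * M + Q * M := by rw [add_mul, add_mul]
          _ = Pplus + P₀ * M := by rw [hPMe, hQM, add_zero]
      have hXH : (P₀ * M)ᴴ = P₀ * M := by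
        have h' : P₀ * M = M - Pplus := by
          conv_rhs => rw [hMdecomp]
          abel
        rw [h', conjTranspose_sub, hM.isHermitian.eq, hP1.eq]
      have hMP0 : M * P₀ = P₀ * M := by
        conv_rhs => rw [← hXH]
        rw [conjTranspose_mul, hM.isHermitian.eq, h01.eq]
      have hX3 : P₀ * M * P₀ = P₀ * M := by
        rw [Matrix.mul_assoc, hMP0, ← Matrix.mul_assoc, h02]
      refine ⟨P₀ * M, ?_, ?_, hMdecomp⟩
      · have h' := hM.conjTranspose_mul_mul_same P₀
        rwa [h01.eq, hX3] at h'
      · have h' := h1M.conjTranspose_mul_mul_same P₀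
        rw [h01.eq] at h'
        have e : P₀ * (1 - M) * P₀ = P₀ - P₀ * M := by
          rw [Matrix.mul_sub, Matrix.mul_one, Matrix.sub_mul, h02, hX3]
        rwa [e] at h'
    · rintro ⟨X, hX, hPX, rfl⟩
      have hXH := hX.isHermitian
      have hYH : ((1 : Matrix N N ℂ) - P₀)ᴴ = 1 - P₀ := by
        rw [conjTranspose_sub, conjTranspose_one, h01.eq]
      have e : ((1 : Matrix N N ℂ) - P₀) * P₀ = 0 := by
        rw [Matrix.sub_mul 1 P₀ P₀, Matrix.one_mul, h02, sub_self]
      have hA1 : ((1 - P₀) * X * (1 - P₀)).PosSemidef := by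
        have h' := hX.conjTranspose_mul_mul_same (1 - P₀)
        rwa [hYH] at h'
      have hA2 : ((1 - P₀) * (P₀ - X) * (1 - P₀)).PosSemidef := by
        have h' := hPX.conjTranspose_mul_mul_same (1 - P₀)
        rwa [hYH] at h'
      have hA2' : (1 - P₀) * (P₀ - X) * (1 - P₀) = -((1 - P₀) * X * (1 - P₀)) := by
        have e2 : ((1 : Matrix N N ℂ) - P₀) * (P₀ - X) = -((1 - P₀) * X) := by
          rw [Matrix.mul_sub (1 - P₀) P₀ X, e, zero_sub]
        rw [e2, Matrix.neg_mul]
      have htr0 : ((1 - P₀) * X * (1 - P₀)).trace = 0 := by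
        have hle : ((1 - P₀) * X * (1 - P₀)).trace ≤ 0 := by
          have h' := np_trace_nonneg hA2
          rw [hA2', trace_neg, neg_nonneg] at h'
          exact h'
        exact le_antisymm hle (np_trace_nonneg hA1)
      have hYXY : (1 - P₀) * X * (1 - P₀) = 0 := np_psd_trace_zero hA1 htr0
      have hT : (hX.sqrt * (1 - P₀))ᴴ * (hX.sqrt * (1 - P₀)) = 0 := by
        rw [conjTranspose_mul, hYH, hX.posSemidef_sqrt.isHermitian]
        calc (1 - P₀) * hX.sqrt * (hX.sqrt * (1 - P₀))
            = (1 - P₀) * (hX.sqrt * hX.sqrt) * (1 - P₀) := by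
              simp only [Matrix.mul_assoc]
          _ = 0 := by rw [hX.sqrt_mul_self]; exact hYXY
      have hTY : hX.sqrt * (1 - P₀) = 0 := conjTranspose_mul_self_eq_zero.mp hT
      have hXY : X * (1 - P₀) = 0 := by
        calc X * (1 - P₀) = hX.sqrt * (hX.sqrt * (1 - P₀)) := by
              rw [← Matrix.mul_assoc, hX.sqrt_mul_self]
          _ = 0 := by rw [hTY, Matrix.mul_zero]
      have hXP0 : X = X * P₀ := by
        have h' := hXY
        rw [Matrix.mul_sub X 1 P₀, Matrix.mul_one, sub_eq_zero] at h'
        exact h'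
      have hP0X : P₀ * X = X := by
        have h' := congrArg conjTranspose hXP0
        rw [conjTranspose_mul, hXH.eq, h01.eq] at h'
        exact h'.symm
      have haX : a * X = 0 := by
        conv_lhs => rw [← hP0X]
        rw [← Matrix.mul_assoc, haP0, Matrix.zero_mul]
      rw [Matrix.mul_add, trace_add, haX, trace_zero, add_zero]
  · -- part 3
    have hUU : star (ha.eigenvectorUnitary : Matrix N N ℂ) * (ha.eigenvectorUnitary : Matrix N N ℂ)
        = 1 := Unitary.star_mul_self_of_mem ha.eigenvectorUnitary.2
    have heig : ∀ i, a *ᵥ ⇑(ha.eigenvectorBasis i)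
        = (ha.eigenvalues i : ℂ) • ⇑(ha.eigenvectorBasis i) := by
      intro i
      have h' := ha.mulVec_eigenvectorBasis i
      rwa [RCLike.real_smul_eq_coe_smul (K := ℂ)] at h'
    have hnorm : ∀ i, star ⇑(ha.eigenvectorBasis i) ⬝ᵥ ⇑(ha.eigenvectorBasis i) = 1 := by
      intro i
      have h' := orthonormal_iff_ite.mp ha.eigenvectorBasis.orthonormal i i
      simp only [if_pos rfl] at h'
      rw [EuclideanSpace.inner_eq_star_dotProduct, dotProduct_comm] at h'; exact h'
    have htr : ∀ B : Matrix N N ℂ, (a * B).trace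
        = ∑ i, (ha.eigenvalues i : ℂ) *
            (star ⇑(ha.eigenvectorBasis i) ⬝ᵥ (B *ᵥ ⇑(ha.eigenvectorBasis i))) := by
      intro B
      conv_lhs => rw [ha.spectral_theorem, Unitary.conjStarAlgAut_apply]
      have e1 : (ha.eigenvectorUnitary : Matrix N N ℂ) *
            diagonal (RCLike.ofReal ∘ ha.eigenvalues) *
            (star (ha.eigenvectorUnitary : Matrix N N ℂ)) * B
          = (ha.eigenvectorUnitary : Matrix N N ℂ) *
            (diagonal (RCLike.ofReal ∘ ha.eigenvalues) *
              ((star (ha.eigenvectorUnitary : Matrix N N ℂ)) * B)) := by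
        simp only [Matrix.mul_assoc]
      rw [e1, Matrix.trace_mul_comm, ← Matrix.mul_assoc]
      -- now trace (D * Uᴴ * B * U)
      rw [Matrix.trace]
      refine Finset.sum_congr rfl fun i _ => ?_
      have e2 : ((diagonal (RCLike.ofReal ∘ ha.eigenvalues) : Matrix N N ℂ) *
            ((star (ha.eigenvectorUnitary : Matrix N N ℂ)) * B *
              (ha.eigenvectorUnitary : Matrix N N ℂ))) i i
          = (ha.eigenvalues i : ℂ) *
            ((star (ha.eigenvectorUnitary : Matrix N N ℂ) * B *
              (ha.eigenvectorUnitary : Matrix N N ℂ)) i i) := by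
        rw [Matrix.diagonal_mul]
        rfl
      have e3 : (diagonal (RCLike.ofReal ∘ ha.eigenvalues) : Matrix N N ℂ) *
            (star (ha.eigenvectorUnitary : Matrix N N ℂ)) * B *
            (ha.eigenvectorUnitary : Matrix N N ℂ)
          = (diagonal (RCLike.ofReal ∘ ha.eigenvalues) : Matrix N N ℂ) *
            ((star (ha.eigenvectorUnitary : Matrix N N ℂ)) * B *
              (ha.eigenvectorUnitary : Matrix N N ℂ)) := by
        simp only [Matrix.mul_assoc]
      rw [Matrix.diag_apply, e3, e2]
      congr 1
      simp only [Matrix.mul_apply, dotProduct, Matrix.mulVec, Matrix.star_apply,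
        Matrix.IsHermitian.eigenvectorUnitary_apply, Finset.sum_mul, Finset.mul_sum,
        Pi.star_apply]
      rw [Finset.sum_comm]
      refine Finset.sum_congr rfl fun j _ => Finset.sum_congr rfl fun k _ => by ring
    have hclaim : ∀ i, (ha.eigenvalues i : ℂ) *
        (star ⇑(ha.eigenvectorBasis i) ⬝ᵥ (Pplus *ᵥ ⇑(ha.eigenvectorBasis i)))
        = ((max (ha.eigenvalues i) 0 : ℝ) : ℂ) := by
      intro i
      rcases lt_trichotomy (ha.eigenvalues i) 0 with hlt | heq0 | hgt
      · have hs := hPpsd.dotProduct_mulVec_nonneg ⇑(ha.eigenvectorBasis i)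
        have hb := hposP.dotProduct_mulVec_nonneg ⇑(ha.eigenvectorBasis i)
        have e1 : (a * Pplus) *ᵥ ⇑(ha.eigenvectorBasis i)
            = (ha.eigenvalues i : ℂ) • (Pplus *ᵥ ⇑(ha.eigenvectorBasis i)) := by
          rw [hcomm, ← mulVec_mulVec, heig i, mulVec_smul]
        rw [e1, dotProduct_smul, smul_eq_mul] at hb
        have hsre := (Complex.le_def.mp hs).1
        have hsim := (Complex.le_def.mp hs).2
        have hbre := (Complex.le_def.mp hb).1
        simp only [Complex.zero_re, Complex.zero_im, Complex.mul_re, Complex.ofReal_re,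
          Complex.ofReal_im, zero_mul, sub_zero] at hsre hsim hbre
        have hzre : (star ⇑(ha.eigenvectorBasis i) ⬝ᵥ
            (Pplus *ᵥ ⇑(ha.eigenvectorBasis i))).re = 0 := by nlinarith
        have hz : star ⇑(ha.eigenvectorBasis i) ⬝ᵥ (Pplus *ᵥ ⇑(ha.eigenvectorBasis i)) = 0 := by
          apply Complex.ext
          · exact hzre
          · exact hsim.symm
        rw [hz, mul_zero, max_eq_right hlt.le, Complex.ofReal_zero]
      · simp [heq0]
      · have hvne : ((ha.eigenvalues i : ℂ)) ≠ 0 := by exact_mod_cast hgt.ne'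
        have hP0v : P₀ *ᵥ ⇑(ha.eigenvectorBasis i) = 0 := by
          have h1 : P₀ *ᵥ (a *ᵥ ⇑(ha.eigenvectorBasis i)) = 0 := by
            rw [mulVec_mulVec, hP0a, zero_mulVec]
          rw [heig i, mulVec_smul, smul_eq_zero] at h1
          exact h1.resolve_left hvne
        have hQv : Q *ᵥ ⇑(ha.eigenvectorBasis i) = 0 := by
          have hq1 := hQpsd.dotProduct_mulVec_nonneg ⇑(ha.eigenvectorBasis i)
          have hq2 := hneg.dotProduct_mulVec_nonneg ⇑(ha.eigenvectorBasis i)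
          have e1 : (-(a * Q)) *ᵥ ⇑(ha.eigenvectorBasis i)
              = -((ha.eigenvalues i : ℂ) • (Q *ᵥ ⇑(ha.eigenvectorBasis i))) := by
            rw [neg_mulVec, haQ, ← mulVec_mulVec, heig i, mulVec_smul]
          rw [e1, dotProduct_neg, dotProduct_smul, smul_eq_mul] at hq2
          have hle := neg_nonneg.mp hq2
          have hge : 0 ≤ (ha.eigenvalues i : ℂ) *
              (star ⇑(ha.eigenvectorBasis i) ⬝ᵥ (Q *ᵥ ⇑(ha.eigenvectorBasis i))) :=
            mul_nonneg (Complex.zero_le_real.mpr hgt.le) hq1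
          have h3 := le_antisymm hle hge
          have hz0 : star ⇑(ha.eigenvectorBasis i) ⬝ᵥ (Q *ᵥ ⇑(ha.eigenvectorBasis i)) = 0 :=
            (mul_eq_zero.mp h3).resolve_left hvne
          exact (hQpsd.dotProduct_mulVec_zero_iff _).mp hz0
        have hPv : Pplus *ᵥ ⇑(ha.eigenvectorBasis i) = ⇑(ha.eigenvectorBasis i) := by
          have hone : (1 : Matrix N N ℂ) = Pplus + P₀ + Q := by rw [hQdef]; abel
          have h1 : (1 : Matrix N N ℂ) *ᵥ ⇑(ha.eigenvectorBasis i)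
              = ⇑(ha.eigenvectorBasis i) := one_mulVec _
          rw [hone, add_mulVec, add_mulVec, hP0v, hQv, add_zero, add_zero] at h1
          exact h1
        rw [hPv, hnorm i, mul_one, max_eq_left hgt.le]
    have htrP : (a * Pplus).trace = ((∑ i, max (ha.eigenvalues i) 0 : ℝ) : ℂ) := by
      rw [htr Pplus, Complex.ofReal_sum]
      exact Finset.sum_congr rfl fun i _ => hclaim i
    have htra : a.trace = ((∑ i, ha.eigenvalues i : ℝ) : ℂ) := by
      have h1 : a.trace = (a * 1).trace := by rw [Matrix.mul_one]
      rw [h1, htr 1, Complex.ofReal_sum]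
      refine Finset.sum_congr rfl fun i _ => ?_
      rw [one_mulVec, hnorm i, mul_one]
    rw [htrP, htra, Complex.ofReal_re, Complex.ofReal_re]
    have hmax : ∀ x : ℝ, max x 0 = (x + |x|) / 2 := by
      intro x
      rcases le_or_gt 0 x with h | h
      · rw [max_eq_left h, abs_of_nonneg h]; ring
      · rw [max_eq_right h.le, abs_of_neg h]; ring
    rw [Finset.sum_congr rfl fun i _ => hmax (ha.eigenvalues i), ← Finset.sum_div,
      Finset.sum_add_distrib]
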